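/- If f is a monoid endomorphism of P_fin0(ℕ), then for every X ∈ P_fin0(ℕ), max f(X) = (max X) · (max f({0,1})). -/

import Mathlib

open Pointwise

/-- The reduced power monoid `P_fin0(ℕ)`: finite subsets of ℕ containing 0,
under setwise (pointwise) addition. -/
def P0 : AddSubmonoid (Finset ℕ) where
  carrier := {X : Finset ℕ | (0 : ℕ) ∈ X}
  add_mem' := fun hx hy => by simpa using Finset.add_mem_add hx hy
  zero_mem' := by simp [Finset.mem_zero]

/-- Maximum of a set in `P0`. -/
def mx (X : P0) : ℕ := X.1.max' ⟨0, X.2⟩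

theorem mem_P0 {X : Finset ℕ} : X ∈ P0 ↔ (0 : ℕ) ∈ X := Iff.rfl

lemma P0_coe_add (X Y : P0) : (X + Y).1 = X.1 + Y.1 := rfl

lemma mx_add (X Y : P0) : mx (X + Y) = mx X + mx Y := by
  apply le_antisymm
  · apply Finset.max'_le
    intro a ha
    rw [P0_coe_add, Finset.mem_add] at ha
    obtain ⟨x, hx, y, hy, rfl⟩ := ha
    exact Nat.add_le_add (Finset.le_max' _ _ hx) (Finset.le_max' _ _ hy)
  · apply Finset.le_max'
    rw [P0_coe_add]
    exact Finset.add_mem_add (Finset.max'_mem _ _) (Finset.max'_mem _ _)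

def In (n : ℕ) : P0 := ⟨Finset.range (n + 1), by show (0 : ℕ) ∈ Finset.range (n + 1); simp⟩

lemma mx_In (n : ℕ) : mx (In n) = n := by
  apply le_antisymm
  · apply Finset.max'_le
    intro a ha
    simp [In, Finset.mem_range] at ha
    omega
  · exact Finset.le_max' _ _ (by simp [In])

lemma I_eq : (⟨({0, 1} : Finset ℕ), by show (0 : ℕ) ∈ ({0, 1} : Finset ℕ); simp⟩ : P0) = In 1 := by
  apply Subtype.ext
  ext a
  simp [In, Finset.mem_range]
  omega

lemma nsmul_I (n : ℕ) : n • In 1 = In n := by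
  induction n with
  | zero =>
    apply Subtype.ext
    show (0 : Finset ℕ) = _
    ext a
    simp [In, Finset.mem_zero]
  | succ n ih =>
    rw [succ_nsmul, ih]
    apply Subtype.ext
    rw [P0_coe_add]
    ext a
    simp only [In, Finset.mem_add, Finset.mem_range]
    constructor
    · rintro ⟨x, hx, y, hy, rfl⟩; omega
    · intro h
      exact ⟨min a n, by omega, a - min a n, by omega, by omega⟩

lemma mx_zero : mx (0 : P0) = 0 := by
  apply le_antisymm
  · apply Finset.max'_le
    intro a ha
    have : a ∈ (0 : Finset ℕ) := ha
    simp [Finset.mem_zero] at this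
    omega
  · omega

lemma key (X : P0) : X + In (mx X) = In (2 * mx X) := by
  apply Subtype.ext
  rw [P0_coe_add]
  ext a
  simp only [In, Finset.mem_add, Finset.mem_range]
  constructor
  · rintro ⟨x, hx, y, hy, rfl⟩
    have hx' : x ≤ mx X := Finset.le_max' X.1 x hx
    omega
  · intro h
    by_cases hc : a ≤ mx X
    · exact ⟨0, X.2, a, by omega, by omega⟩
    · refine ⟨mx X, Finset.max'_mem _ _, a - mx X, by omega, by omega⟩

/-- for an endomorphism `f` of P_fin0(ℕ),
`max f(X) = max X · max f({0,1})`. -/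
theorem stmt8 (f : P0 →+ P0) (X : P0) :
    mx (f X) = mx X * mx (f ⟨({0, 1} : Finset ℕ), by simp [mem_P0]⟩) := by
  rw [I_eq]
  have hsmul : ∀ n : ℕ, mx (f (In n)) = n * mx (f (In 1)) := by
    intro n
    rw [← nsmul_I n, map_nsmul]
    induction n with
    | zero => rw [zero_nsmul, mx_zero]; ring
    | succ n ih =>
      rw [succ_nsmul, mx_add, ih]
      ring
  have h := congrArg (fun Z => mx (f Z)) (key X)
  simp only [map_add, mx_add] at h
  rw [hsmul (mx X), hsmul (2 * mx X), two_mul, add_mul] at h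
  omega
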